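/- For any stochastic matrix P on a finite nonempty set S (each row of P lies in Δ(S)) and any vector V : S → ℝ, the span seminorm contracts by the ergodicity coefficient: sp(PV) ≤ (1 − α(P)) · sp(V), where sp(V) = max_s V(s) − min_s V(s) and α(P) = 1 − (1/2) max_{i,j ∈ S} ∑_{k ∈ S} |P_{ik} − P_{jk}|. -/
import Mathlib

open Matrix

/-- Span seminorm `sp(V) = max_s V(s) − min_s V(s)`. -/
noncomputable def spanSemi {S : Type*} [Fintype S] [Nonempty S] (V : S → ℝ) : ℝ :=
  (⨆ s, V s) - ⨅ s, V s

/-- Ergodicity coefficient `α(P) = 1 − (1/2) max_{i,j} ∑_k |P_{ik} − P_{jk}|`. -/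
noncomputable def ergCoeff {S : Type*} [Fintype S] [Nonempty S] (P : Matrix S S ℝ) : ℝ :=
  1 - (1 / 2) * ⨆ p : S × S, ∑ k, |P p.1 k - P p.2 k|

lemma key_sum {S : Type*} [Fintype S] [Nonempty S] (d V : S → ℝ)
    (hd : ∑ k, d k = 0) :
    ∑ k, d k * V k ≤ (1/2) * (∑ k, |d k|) * ((⨆ s, V s) - ⨅ s, V s) := by
  set M := ⨆ s, V s with hMdef
  set m := ⨅ s, V s with hmdef
  have hbA : BddAbove (Set.range V) := (Set.finite_range V).bddAbove
  have hbB : BddBelow (Set.range V) := (Set.finite_range V).bddBelow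
  have hM : ∀ k, V k ≤ M := fun k => le_ciSup hbA k
  have hm : ∀ k, m ≤ V k := fun k => ciInf_le hbB k
  have h1 : ∀ k, d k * V k ≤ max (d k) 0 * M - max (-(d k)) 0 * m := by
    intro k
    rcases le_or_gt 0 (d k) with h | h
    · rw [max_eq_left h, max_eq_right (by linarith : -(d k) ≤ 0)]
      have := mul_le_mul_of_nonneg_left (hM k) h
      linarith
    · rw [max_eq_right h.le, max_eq_left (by linarith : 0 ≤ -(d k))]
      nlinarith [hm k]
  have hsum : ∑ k, d k * V k ≤ (∑ k, max (d k) 0) * M - (∑ k, max (-(d k)) 0) * m := by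
    rw [Finset.sum_mul, Finset.sum_mul, ← Finset.sum_sub_distrib]
    exact Finset.sum_le_sum fun k _ => h1 k
  set A := ∑ k, max (d k) 0 with hA
  set B := ∑ k, max (-(d k)) 0 with hB
  have hAB : A - B = 0 := by
    have heq : ∑ k, (max (d k) 0 - max (-(d k)) 0) = ∑ k, d k := by
      apply Finset.sum_congr rfl
      intro k _
      rcases le_or_gt 0 (d k) with h | h
      · rw [max_eq_left h, max_eq_right (by linarith : -(d k) ≤ 0)]; ring
      · rw [max_eq_right h.le, max_eq_left (by linarith : 0 ≤ -(d k))]; ring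
    rw [hA, hB, ← Finset.sum_sub_distrib, heq, hd]
  have hABsum : A + B = ∑ k, |d k| := by
    rw [hA, hB, ← Finset.sum_add_distrib]
    apply Finset.sum_congr rfl
    intro k _
    rcases le_or_gt 0 (d k) with h | h
    · rw [max_eq_left h, max_eq_right (by linarith : -(d k) ≤ 0), abs_of_nonneg h]; ring
    · rw [max_eq_right h.le, max_eq_left (by linarith : 0 ≤ -(d k)), abs_of_neg h]; ring
  have hAeq : A = (1/2) * ∑ k, |d k| := by linarith
  have hBeq : B = (1/2) * ∑ k, |d k| := by linarith
  calc ∑ k, d k * V k ≤ A * M - B * m := hsum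
    _ = (1/2) * (∑ k, |d k|) * (M - m) := by rw [hAeq, hBeq]; ring

/-- For any stochastic matrix `P` and vector `V`,
`sp(PV) ≤ (1 − α(P)) sp(V)`. -/
theorem stmt17 {S : Type*} [Fintype S] [Nonempty S]
    (P : Matrix S S ℝ) (hP : ∀ i, P i ∈ stdSimplex ℝ S)
    (V : S → ℝ) :
    spanSemi (P *ᵥ V) ≤ (1 - ergCoeff P) * spanSemi V := by
  obtain ⟨i, hi⟩ := Finite.exists_max (P *ᵥ V)
  obtain ⟨j, hj⟩ := Finite.exists_min (P *ᵥ V)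
  have hsup : (⨆ s, (P *ᵥ V) s) = (P *ᵥ V) i :=
    le_antisymm (ciSup_le hi) (le_ciSup (Set.finite_range _).bddAbove i)
  have hinf : (⨅ s, (P *ᵥ V) s) = (P *ᵥ V) j :=
    le_antisymm (ciInf_le (Set.finite_range _).bddBelow j) (le_ciInf hj)
  have hspan : spanSemi (P *ᵥ V) = ∑ k, (P i k - P j k) * V k := by
    rw [spanSemi, hsup, hinf]
    simp only [mulVec, dotProduct]
    rw [← Finset.sum_sub_distrib]
    apply Finset.sum_congr rfl
    intro k _
    ring
  have hd : ∑ k, (P i k - P j k) = 0 := by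
    rw [Finset.sum_sub_distrib, (hP i).2, (hP j).2]
    ring
  have hkey := key_sum (fun k => P i k - P j k) V hd
  have hspV : (0:ℝ) ≤ spanSemi V := by
    rw [spanSemi]
    obtain ⟨s⟩ := ‹Nonempty S›
    have h1 := ciInf_le (Set.finite_range V).bddBelow s
    have h2 := le_ciSup (Set.finite_range V).bddAbove s
    linarith
  have hle : (∑ k, |P i k - P j k|) ≤ ⨆ p : S × S, ∑ k, |P p.1 k - P p.2 k| :=
    le_ciSup (f := fun p : S × S => ∑ k, |P p.1 k - P p.2 k|)
      (Set.finite_range _).bddAbove (i, j)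
  have h2 : (1 - ergCoeff P) = (1/2) * ⨆ p : S × S, ∑ k, |P p.1 k - P p.2 k| := by
    rw [ergCoeff]; ring
  rw [hspan, h2]
  calc ∑ k, (P i k - P j k) * V k
      ≤ (1/2) * (∑ k, |P i k - P j k|) * spanSemi V := hkey
    _ ≤ (1/2) * (⨆ p : S × S, ∑ k, |P p.1 k - P p.2 k|) * spanSemi V := by
        apply mul_le_mul_of_nonneg_right _ hspV
        nlinarith [hle]
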